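/- For the graph of f = T₀ + ε e^{-3R/λ} (T₀ ≠ 0, ε small) in (-dT² + sinh²(T/λ)ğ_H), the mean curvature satisfies tr_g K = (3/λ)coth(T₀/λ) - (12ε/λ²) sinh^{-2}(T₀/λ) e^{-5R/λ} + O(e^{-6R/λ}) as R → ∞; equivalently tr_g K · sinh(T₀/λ) - (3/λ)cosh(T₀/λ) = -(12ε/(λ² sinh(T₀/λ))) e^{-5R/λ} + O(e^{-6R/λ}). -/

import Mathlib

open Asymptotics Filter Real Topology

noncomputable def expDecay (lam k : ℝ) : ℝ → ℝ := fun R => Real.exp (-k * R / lam)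

lemma expDecay_pos (lam k R : ℝ) : 0 < expDecay lam k R := Real.exp_pos _

lemma expDecay_tendsto (lam k : ℝ) (hlam : 0 < lam) (hk : 0 < k) :
    Tendsto (expDecay lam k) atTop (𝓝 0) := by
  have h1 : Tendsto (fun R : ℝ => k / lam * R) atTop atTop :=
    Tendsto.const_mul_atTop (by positivity) tendsto_id
  have h2 := Real.tendsto_exp_neg_atTop_nhds_zero.comp h1
  refine h2.congr fun R => ?_
  simp only [Function.comp, expDecay]
  ring_nf

lemma expDecay_isBigO (lam : ℝ) (hlam : 0 < lam) {a b : ℝ} (h : b ≤ a) :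
    expDecay lam a =O[atTop] expDecay lam b := by
  refine IsBigO.of_bound 1 ?_
  filter_upwards [eventually_ge_atTop (0:ℝ)] with R hR
  simp only [Real.norm_eq_abs, expDecay, abs_of_pos (Real.exp_pos _), one_mul]
  apply Real.exp_le_exp.mpr
  apply div_le_div_of_nonneg_right ?_ hlam.le
  nlinarith

lemma expDecay_mul (lam a b : ℝ) (R : ℝ) :
    expDecay lam a R * expDecay lam b R = expDecay lam (a + b) R := by
  simp only [expDecay, ← Real.exp_add]
  ring_nf

lemma expDecay_pow (lam : ℝ) (n : ℕ) (R : ℝ) :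
    expDecay lam 1 R ^ n = expDecay lam n R := by
  simp only [expDecay, ← Real.exp_nat_mul]
  ring_nf

lemma abs_sinh_sub_le (w : ℝ) (hw : |w| ≤ 1) : |Real.sinh w - w| ≤ w ^ 2 := by
  have h1 := Real.exp_bound hw (n := 2) (by norm_num)
  have h2 := Real.exp_bound (x := -w) (by rwa [abs_neg]) (n := 2) (by norm_num)
  simp only [Finset.sum_range_succ, Finset.sum_range_zero] at h1 h2
  norm_num at h1 h2
  rw [Real.sinh_eq]
  have he : (Real.exp w - Real.exp (-w)) / 2 - w
      = ((Real.exp w - (1 + w)) - (Real.exp (-w) - (1 - w))) / 2 := by ring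
  rw [he, abs_div, abs_two]
  have ht : |(Real.exp w - (1 + w)) - (Real.exp (-w) - (1 - w))|
      ≤ |Real.exp w - (1 + w)| + |Real.exp (-w) - (1 - w)| := abs_sub _ _
  have h2' : |Real.exp (-w) - (1 - w)| ≤ w ^ 2 * (3 / 4) := by
    rw [sub_eq_add_neg 1 w]; exact h2
  linarith [sq_nonneg w]

lemma tendsto_mul_expDecay_isBigO {lam : ℝ} (hlam : 0 < lam) {h : ℝ → ℝ} {L a b : ℝ}
    (hh : Tendsto h atTop (𝓝 L)) (hab : b ≤ a) :
    (fun R => h R * expDecay lam a R) =O[atTop] expDecay lam b := by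
  have h2 := (hh.isBigO_one ℝ).mul (isBigO_refl (expDecay lam a) atTop)
  have h3 : (fun R => h R * expDecay lam a R) =O[atTop] expDecay lam a := by
    simpa using h2
  exact h3.trans (expDecay_isBigO lam hlam hab)

lemma isBigO_mul_tendsto {lam : ℝ} (hlam : 0 < lam) {g h : ℝ → ℝ} {L a b : ℝ}
    (hg : g =O[atTop] expDecay lam a) (hh : Tendsto h atTop (𝓝 L)) (hab : b ≤ a) :
    (fun R => g R * h R) =O[atTop] expDecay lam b := by
  have h2 := hg.mul (hh.isBigO_one ℝ)
  have h3 : (fun R => g R * h R) =O[atTop] expDecay lam a := by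
    simpa using h2
  exact h3.trans (expDecay_isBigO lam hlam hab)

lemma isBigO_mul_expDecay {lam : ℝ} {g₁ g₂ : ℝ → ℝ} {a b : ℝ}
    (h1 : g₁ =O[atTop] expDecay lam a) (h2 : g₂ =O[atTop] expDecay lam b) :
    (fun R => g₁ R * g₂ R) =O[atTop] expDecay lam (a + b) := by
  refine (h1.mul h2).congr' EventuallyEq.rfl ?_
  exact Eventually.of_forall fun R => expDecay_mul lam a b R


set_option maxHeartbeats 2000000 in
/-- For the graph of `f = T₀ + ε e^{-3R/λ}` (`T₀ ≠ 0`, `ε` small enough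
that the graph is spacelike) in `(-dT² + sinh²(T/λ)ğ_H)`, the mean curvature
`tr_g K = μρ⁻²(ĝ^{ij} + μ²ρ⁻²∇ⁱf∇ʲf)∇²ᵢⱼf - μ³ρ'ρ⁻¹ + 4μρ'ρ⁻¹` (with `ρ = sinh(f/λ)`,
`ρ' = (1/λ)cosh(f/λ)`, frame Hessian `∇²₁₁f = f''`,
`∇²₂₂f = ∇²₃₃f = (1/λ)coth(R/λ)f'`, `∇ⁱf∇ʲf` only nonzero for `i=j=1`, `n = 3`)
satisfies `tr_g K = (3/λ)coth(T₀/λ) - (12ε/λ²)sinh^{-2}(T₀/λ)e^{-5R/λ} + O(e^{-6R/λ})`;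
equivalently
`tr_g K sinh(T₀/λ) - (3/λ)cosh(T₀/λ) = -(12ε/(λ²sinh(T₀/λ)))e^{-5R/λ} + O(e^{-6R/λ})`. -/
theorem mean_curvature_of_hyperbolic_graph (lam T₀ ε : ℝ) (hlam : 0 < lam)
    (hT₀ : T₀ ≠ 0)
    (f : ℝ → ℝ) (hf : ∀ R, f R = T₀ + ε * Real.exp (-3 * R / lam))
    (hspacelike : ∀ R, 0 ≤ R → (deriv f R)^2 < (Real.sinh (f R / lam))^2)
    (μ : ℝ → ℝ)
    (hμ : ∀ R, μ R = (1 - (deriv f R)^2 / (Real.sinh (f R / lam))^2) ^ (-(1/2) : ℝ))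
    (H11 H22 : ℝ → ℝ)
    (hH11 : ∀ R, H11 R = deriv (deriv f) R)
    (hH22 : ∀ R, H22 R
      = (Real.cosh (R / lam) / Real.sinh (R / lam) / lam) * deriv f R)
    (trK : ℝ → ℝ)
    (htrK : ∀ R, trK R
      = μ R / (Real.sinh (f R / lam))^2
          * ((H11 R + H22 R + H22 R)
            + (μ R)^2 / (Real.sinh (f R / lam))^2 * (deriv f R)^2 * H11 R)
        - (μ R)^3 * (Real.cosh (f R / lam) / lam) / Real.sinh (f R / lam)
        + 4 * μ R * (Real.cosh (f R / lam) / lam) / Real.sinh (f R / lam)) :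
    (∃ C R₀ : ℝ, ∀ R, R₀ ≤ R →
      |trK R - ((3 / lam) * (Real.cosh (T₀ / lam) / Real.sinh (T₀ / lam))
          - (12 * ε / lam^2) * ((Real.sinh (T₀ / lam))^2)⁻¹
            * Real.exp (-5 * R / lam))|
        ≤ C * Real.exp (-6 * R / lam)) ∧
    (∃ C R₀ : ℝ, ∀ R, R₀ ≤ R →
      |trK R * Real.sinh (T₀ / lam) - (3 / lam) * Real.cosh (T₀ / lam)
          - (-(12 * ε / (lam^2 * Real.sinh (T₀ / lam))) * Real.exp (-5 * R / lam))|
        ≤ C * Real.exp (-6 * R / lam)) := by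
  have hl : lam ≠ 0 := ne_of_gt hlam
  set s₀ := Real.sinh (T₀ / lam) with hs₀def
  set c₀ := Real.cosh (T₀ / lam) with hc₀def
  have hs₀ : s₀ ≠ 0 := by
    rw [hs₀def, ne_eq, Real.sinh_eq_zero]
    exact div_ne_zero hT₀ hl
  -- derivatives of f
  have hfe : f = fun R => T₀ + ε * Real.exp (-3 * R / lam) := funext hf
  have hder : ∀ R : ℝ, HasDerivAt (fun R => Real.exp (-3 * R / lam))
      (Real.exp (-3 * R / lam) * (-3 / lam)) R := by
    intro R
    have h1 : HasDerivAt (fun R : ℝ => -3 * R / lam) (-3 / lam) R := by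
      simpa using ((hasDerivAt_id R).const_mul (-3 : ℝ)).div_const lam
    exact (Real.hasDerivAt_exp _).comp R h1
  have hd : ∀ R, deriv f R = -(3 * ε / lam) * Real.exp (-3 * R / lam) := by
    intro R
    have h3 : HasDerivAt f (ε * (Real.exp (-3 * R / lam) * (-3 / lam))) R := by
      rw [hfe]; exact ((hder R).const_mul ε).const_add T₀
    rw [h3.deriv]; ring
  have hdf : deriv f = fun R => -(3 * ε / lam) * Real.exp (-3 * R / lam) := funext hd
  have hdd : ∀ R, deriv (deriv f) R = (9 * ε / lam ^ 2) * Real.exp (-3 * R / lam) := by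
    intro R
    rw [hdf, ((hder R).const_mul (-(3 * ε / lam))).deriv]
    field_simp
    ring_nf
  -- tendsto facts
  have hE3_0 : Tendsto (expDecay lam 3) atTop (𝓝 0) :=
    expDecay_tendsto lam 3 hlam (by norm_num)
  have hE2_0 : Tendsto (expDecay lam 2) atTop (𝓝 0) :=
    expDecay_tendsto lam 2 hlam (by norm_num)
  have hE6_0 : Tendsto (expDecay lam 6) atTop (𝓝 0) :=
    expDecay_tendsto lam 6 hlam (by norm_num)
  have hflam : (fun R => f R / lam) = fun R => T₀ / lam + ε / lam * expDecay lam 3 R := by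
    funext R; rw [hf]; simp only [expDecay]; ring
  have hft : Tendsto (fun R => f R / lam) atTop (𝓝 (T₀ / lam)) := by
    rw [hflam]
    have h1 : Tendsto (fun R => ε / lam * expDecay lam 3 R) atTop (𝓝 (ε / lam * 0)) :=
      hE3_0.const_mul _
    simpa using (tendsto_const_nhds (x := T₀ / lam)).add h1
  have hst : Tendsto (fun R => Real.sinh (f R / lam)) atTop (𝓝 s₀) :=
    (Real.continuous_sinh.tendsto _).comp hft
  have hct : Tendsto (fun R => Real.cosh (f R / lam)) atTop (𝓝 c₀) :=
    (Real.continuous_cosh.tendsto _).comp hft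
  have hsne : ∀ᶠ R in atTop, Real.sinh (f R / lam) ≠ 0 := hst.eventually_ne hs₀
  have hs2inv : Tendsto (fun R => ((Real.sinh (f R / lam)) ^ 2)⁻¹) atTop (𝓝 ((s₀ ^ 2)⁻¹)) :=
    (hst.pow 2).inv₀ (pow_ne_zero 2 hs₀)
  -- μ analysis
  set u : ℝ → ℝ := fun R => (deriv f R) ^ 2 / (Real.sinh (f R / lam)) ^ 2 with hu
  have hu_eq : u = fun R =>
      (3 * ε / lam) ^ 2 * expDecay lam 6 R * ((Real.sinh (f R / lam)) ^ 2)⁻¹ := by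
    funext R
    have hsq : Real.exp (-3 * R / lam) ^ 2 = expDecay lam 6 R := by
      rw [sq, show Real.exp (-3 * R / lam) = expDecay lam 3 R from rfl, expDecay_mul]
      norm_num
    simp only [hu, hd R, div_eq_mul_inv, mul_pow]
    rw [← hsq]
    ring
  have hu0 : Tendsto u atTop (𝓝 0) := by
    rw [hu_eq]
    have h1 : Tendsto (fun R => (3 * ε / lam) ^ 2 * expDecay lam 6 R) atTop
        (𝓝 ((3 * ε / lam) ^ 2 * 0)) := hE6_0.const_mul _
    simpa using h1.mul hs2inv
  have huO : u =O[atTop] expDecay lam 6 := by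
    rw [hu_eq]
    exact isBigO_mul_tendsto hlam
      ((isBigO_refl (expDecay lam 6) atTop).const_mul_left _) hs2inv le_rfl
  have hgd : HasDerivAt (fun w : ℝ => (1 - w) ^ (-(1/2) : ℝ))
      ((-(1/2) : ℝ) * 1 ^ ((-(1/2) : ℝ) - 1) * (-1)) 0 := by
    have h1 : HasDerivAt (fun w : ℝ => 1 - w) (-1) 0 := by
      simpa using (hasDerivAt_id (0 : ℝ)).const_sub 1
    have h2 : HasDerivAt (fun x : ℝ => x ^ (-(1/2) : ℝ))
        (-(1/2) * 1 ^ ((-(1/2) : ℝ) - 1)) ((fun w : ℝ => 1 - w) 0) := by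
      simpa using Real.hasDerivAt_rpow_const (x := 1) (p := (-(1/2) : ℝ)) (Or.inl one_ne_zero)
    exact h2.comp 0 h1
  have hμeq : μ = (fun w : ℝ => (1 - w) ^ (-(1/2) : ℝ)) ∘ u := funext fun R => hμ R
  have hμt : Tendsto μ atTop (𝓝 1) := by
    rw [hμeq]
    have := hgd.continuousAt.tendsto.comp hu0
    simpa using this
  have hμsubO : (fun R => μ R - 1) =O[atTop] expDecay lam 6 := by
    have h1 := hgd.isBigO_sub.comp_tendsto hu0
    have h2 : (fun R => μ R - 1) =O[atTop] u := by
      refine h1.congr' ?_ ?_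
      · refine Eventually.of_forall fun R => ?_
        simp [hμeq, Function.comp, Real.one_rpow]
      · refine Eventually.of_forall fun R => ?_
        simp
    exact h2.trans huO
  -- sinh difference
  have hssubO : (fun R => Real.sinh (f R / lam) - s₀) =O[atTop] expDecay lam 3 := by
    have h1 := (Real.hasDerivAt_sinh (T₀ / lam)).isBigO_sub.comp_tendsto hft
    have h2 : (fun R => Real.sinh (f R / lam) - s₀) =O[atTop]
        (fun R => ε / lam * expDecay lam 3 R) := by
      refine h1.congr' (Eventually.of_forall fun R => rfl) (Eventually.of_forall fun R => ?_)
      simp only [Function.comp]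
      rw [hf]; simp only [expDecay]; ring
    exact h2.trans (((isBigO_refl (expDecay lam 3) atTop).const_mul_left (ε / lam)))
  -- the decomposition functions
  set D1 : ℝ → ℝ := fun R =>
    (μ R ^ 3 * (81 * ε ^ 3 / lam ^ 4) * ((Real.sinh (f R / lam)) ^ 4)⁻¹) * expDecay lam 9 R
    with hD1
  set D2 : ℝ → ℝ := fun R =>
    ((12 * ε / lam ^ 2) * ((s₀ ^ 2)⁻¹
      - μ R / ((Real.sinh (f R / lam)) ^ 2 * (1 - expDecay lam 2 R)))) * expDecay lam 5 R
    with hD2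
  set D3 : ℝ → ℝ := fun R =>
    (4 * (μ R - 1) - (μ R ^ 3 - 1)) * (Real.cosh (f R / lam) / (lam * Real.sinh (f R / lam)))
    with hD3
  set D4 : ℝ → ℝ := fun R =>
    (3 * ε / lam ^ 2) * expDecay lam 3 R * μ R / (Real.sinh (f R / lam)) ^ 2
      + 3 * (Real.cosh (f R / lam) * s₀ - c₀ * Real.sinh (f R / lam))
        / (lam * Real.sinh (f R / lam) * s₀) with hD4
  -- the key algebraic identity
  have hkey : ∀ᶠ R in atTop, trK R - ((3 / lam) * (c₀ / s₀)
      - (12 * ε / lam ^ 2) * (s₀ ^ 2)⁻¹ * Real.exp (-5 * R / lam))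
      = D1 R + D2 R + D3 R + D4 R := by
    filter_upwards [hsne, eventually_ge_atTop (1 : ℝ)] with R hs hR1
    have hR0 : (0 : ℝ) < R := lt_of_lt_of_le one_pos hR1
    set X := expDecay lam 1 R with hX
    have hX0 : 0 < X := expDecay_pos _ _ _
    have hX1 : X < 1 := by
      rw [hX]
      show Real.exp (-1 * R / lam) < 1
      rw [Real.exp_lt_one_iff]
      exact div_neg_of_neg_of_pos (by nlinarith) hlam
    have hXpow : ∀ k : ℕ, Real.exp (-(k : ℝ) * R / lam) = X ^ k := by
      intro k
      rw [hX, expDecay_pow]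
      rfl
    have hX2 : Real.exp (-2 * R / lam) = X ^ 2 := by
      rw [show (-2 : ℝ) * R / lam = -((2:ℕ):ℝ) * R / lam by norm_num]; exact hXpow 2
    have hX3 : Real.exp (-3 * R / lam) = X ^ 3 := by
      rw [show (-3 : ℝ) * R / lam = -((3:ℕ):ℝ) * R / lam by norm_num]; exact hXpow 3
    have hX5 : Real.exp (-5 * R / lam) = X ^ 5 := by
      rw [show (-5 : ℝ) * R / lam = -((5:ℕ):ℝ) * R / lam by norm_num]; exact hXpow 5
    have hE2X : expDecay lam 2 R = X ^ 2 := hX2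
    have hE3X : expDecay lam 3 R = X ^ 3 := hX3
    have hE5X : expDecay lam 5 R = X ^ 5 := hX5
    have hE9X : expDecay lam 9 R = X ^ 9 := by
      show Real.exp (-9 * R / lam) = X ^ 9
      rw [show (-9 : ℝ) * R / lam = -((9:ℕ):ℝ) * R / lam by norm_num]; exact hXpow 9
    have hXe : Real.exp (R / lam) * X = 1 := by
      rw [hX]
      show Real.exp (R / lam) * Real.exp (-1 * R / lam) = 1
      rw [← Real.exp_add, show R / lam + -1 * R / lam = 0 by ring]
      exact Real.exp_zero
    have hXneg : Real.exp (-(R / lam)) = X := by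
      rw [hX]
      show Real.exp (-(R / lam)) = Real.exp (-1 * R / lam)
      congr 1; ring
    have hsinhR : Real.sinh (R / lam) = (1 - X ^ 2) * (Real.exp (R / lam) / 2) := by
      rw [Real.sinh_eq, hXneg]
      linear_combination (X / 2) * hXe
    have hcoshR : Real.cosh (R / lam) = (1 + X ^ 2) * (Real.exp (R / lam) / 2) := by
      rw [Real.cosh_eq, hXneg]
      linear_combination (-(X / 2)) * hXe
    have hcoth : Real.cosh (R / lam) / Real.sinh (R / lam) = (1 + X ^ 2) / (1 - X ^ 2) := by
      rw [hsinhR, hcoshR, mul_div_mul_right _ _ (by positivity : Real.exp (R / lam) / 2 ≠ 0)]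
    have h1X2 : 1 - X ^ 2 ≠ 0 := by nlinarith
    simp only [hD1, hD2, hD3, hD4]
    rw [htrK R, hH11 R, hH22 R, hdd R, hd R, hcoth, hX3, hX5, hE2X, hE3X, hE5X, hE9X]
    field_simp
    ring
  -- O-estimates
  have hD1O : D1 =O[atTop] expDecay lam 6 := by
    rw [hD1]
    have ht : Tendsto (fun R => μ R ^ 3 * (81 * ε ^ 3 / lam ^ 4)
        * ((Real.sinh (f R / lam)) ^ 4)⁻¹) atTop
        (𝓝 (1 ^ 3 * (81 * ε ^ 3 / lam ^ 4) * (s₀ ^ 4)⁻¹)) :=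
      ((hμt.pow 3).mul_const _).mul ((hst.pow 4).inv₀ (pow_ne_zero 4 hs₀))
    exact tendsto_mul_expDecay_isBigO hlam ht (by norm_num)
  have hE2half : ∀ᶠ R in atTop, expDecay lam 2 R < 1/2 :=
    hE2_0.eventually_lt_const (by norm_num)
  have hb1 : (fun R => (s₀ ^ 2)⁻¹ - ((Real.sinh (f R / lam)) ^ 2)⁻¹)
      =O[atTop] expDecay lam 1 := by
    have hcore : (fun R => (Real.sinh (f R / lam) - s₀) * ((Real.sinh (f R / lam) + s₀)
        * ((s₀ ^ 2)⁻¹ * ((Real.sinh (f R / lam)) ^ 2)⁻¹))) =O[atTop] expDecay lam 1 :=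
      isBigO_mul_tendsto hlam hssubO
        ((hst.add tendsto_const_nhds).mul (tendsto_const_nhds.mul hs2inv)) (by norm_num)
    refine hcore.congr' ?_ EventuallyEq.rfl
    filter_upwards [hsne] with R hs
    field_simp
    ring
  have hb2 : (fun R => ((Real.sinh (f R / lam)) ^ 2)⁻¹
      * (1 - μ R / (1 - expDecay lam 2 R))) =O[atTop] expDecay lam 1 := by
    have h1 : (fun R => (1 - μ R) - expDecay lam 2 R) =O[atTop] expDecay lam 2 := by
      have := (hμsubO.neg_left.trans
        (expDecay_isBigO lam hlam (by norm_num : (2:ℝ) ≤ 6))).sub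
        (isBigO_refl (expDecay lam 2) atTop)
      refine this.congr' (Eventually.of_forall fun R => by ring) EventuallyEq.rfl
    have h2 : Tendsto (fun R => (1 - expDecay lam 2 R)⁻¹
        * ((Real.sinh (f R / lam)) ^ 2)⁻¹) atTop (𝓝 ((1 - 0)⁻¹ * (s₀ ^ 2)⁻¹)) :=
      ((tendsto_const_nhds.sub hE2_0).inv₀ (by norm_num)).mul hs2inv
    have hcore : (fun R => ((1 - μ R) - expDecay lam 2 R)
        * ((1 - expDecay lam 2 R)⁻¹ * ((Real.sinh (f R / lam)) ^ 2)⁻¹))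
        =O[atTop] expDecay lam 1 :=
      isBigO_mul_tendsto hlam h1 h2 (by norm_num)
    refine hcore.congr' ?_ EventuallyEq.rfl
    filter_upwards [hsne, hE2half] with R hs hE2
    have h12 : 1 - expDecay lam 2 R ≠ 0 := ne_of_gt (by linarith)
    field_simp
    ring
  have hbr : (fun R => (s₀ ^ 2)⁻¹
      - μ R / ((Real.sinh (f R / lam)) ^ 2 * (1 - expDecay lam 2 R)))
      =O[atTop] expDecay lam 1 := by
    refine (hb1.add hb2).congr' ?_ EventuallyEq.rfl
    filter_upwards [hsne, hE2half] with R hs hE2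
    have h12 : 1 - expDecay lam 2 R ≠ 0 := ne_of_gt (by linarith)
    field_simp
    ring
  have hD2O : D2 =O[atTop] expDecay lam 6 := by
    rw [hD2]
    have h15 := (hbr.const_mul_left (12 * ε / lam ^ 2)).mul
      (isBigO_refl (expDecay lam 5) atTop)
    have hEq : (fun R => expDecay lam 1 R * expDecay lam 5 R) = expDecay lam 6 := by
      funext R; rw [expDecay_mul]; norm_num
    rw [hEq] at h15
    exact h15
  have hμ3O : (fun R => μ R ^ 3 - 1) =O[atTop] expDecay lam 6 := by
    have hcore := isBigO_mul_tendsto hlam hμsubO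
      (((hμt.pow 2).add hμt).add (tendsto_const_nhds (x := (1:ℝ)))) (le_refl 6)
    exact hcore.congr' (Eventually.of_forall fun R => by ring) EventuallyEq.rfl
  have hcore3 : (fun R => 4 * (μ R - 1) - (μ R ^ 3 - 1)) =O[atTop] expDecay lam 6 :=
    (hμsubO.const_mul_left 4).sub hμ3O
  have hD3O : D3 =O[atTop] expDecay lam 6 := by
    rw [hD3]
    exact isBigO_mul_tendsto hlam hcore3
      (hct.div (tendsto_const_nhds.mul hst) (mul_ne_zero hl hs₀)) le_rfl
  -- D4
  set v : ℝ → ℝ := fun R => ε / lam * expDecay lam 3 R with hv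
  have hv0 : Tendsto v atTop (𝓝 0) := by
    rw [hv]; simpa using hE3_0.const_mul (ε / lam)
  have hvO : v =O[atTop] expDecay lam 3 := by
    rw [hv]; exact (isBigO_refl _ _).const_mul_left _
  have hcs : ∀ R : ℝ, Real.cosh (f R / lam) * s₀ - c₀ * Real.sinh (f R / lam)
      = -Real.sinh (v R) := by
    intro R
    have h := Real.sinh_sub (T₀ / lam) (f R / lam)
    have harg : T₀ / lam - f R / lam = -(v R) := by
      simp only [hv]; rw [hf]; simp only [expDecay]; ring
    rw [harg, Real.sinh_neg, ← hs₀def, ← hc₀def] at h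
    linear_combination -h
  have hkey4 : ∀ᶠ R in atTop, D4 R
      = 3 / lam * (v R * (μ R - 1) * ((Real.sinh (f R / lam)) ^ 2)⁻¹)
      + 3 / lam * (v R * (s₀ - Real.sinh (f R / lam))
          * (((Real.sinh (f R / lam)) ^ 2)⁻¹ * s₀⁻¹))
      + 3 / lam * ((v R - Real.sinh (v R)) * ((Real.sinh (f R / lam))⁻¹ * s₀⁻¹)) := by
    filter_upwards [hsne] with R hs
    simp only [hD4]
    rw [hcs R]
    simp only [hv]
    field_simp
    ring
  have hp1 : (fun R => v R * (μ R - 1) * ((Real.sinh (f R / lam)) ^ 2)⁻¹)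
      =O[atTop] expDecay lam 6 := by
    have h9 := isBigO_mul_expDecay hvO hμsubO
    have h9' : (fun R => v R * (μ R - 1)) =O[atTop] expDecay lam 9 := by
      norm_num at h9; exact h9
    exact isBigO_mul_tendsto hlam h9' hs2inv (by norm_num)
  have hp2 : (fun R => v R * (s₀ - Real.sinh (f R / lam))
      * (((Real.sinh (f R / lam)) ^ 2)⁻¹ * s₀⁻¹)) =O[atTop] expDecay lam 6 := by
    have hsflip : (fun R => s₀ - Real.sinh (f R / lam)) =O[atTop] expDecay lam 3 := by
      have := hssubO.neg_left
      refine this.congr' (Eventually.of_forall fun R => by ring) EventuallyEq.rfl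
    have h6 := isBigO_mul_expDecay hvO hsflip
    have h6' : (fun R => v R * (s₀ - Real.sinh (f R / lam))) =O[atTop] expDecay lam 6 := by
      norm_num at h6; exact h6
    exact isBigO_mul_tendsto hlam h6' (hs2inv.mul tendsto_const_nhds) le_rfl
  have hp3core : (fun R => v R - Real.sinh (v R)) =O[atTop] expDecay lam 6 := by
    have hv1 : ∀ᶠ R in atTop, |v R| ≤ 1 := by
      have habs : Tendsto (fun R => |v R|) atTop (𝓝 0) := by
        have := hv0.abs; simpa using this
      exact habs.eventually_le_const one_pos
    refine IsBigO.of_bound ((ε / lam) ^ 2) ?_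
    filter_upwards [hv1] with R h1
    rw [Real.norm_eq_abs, Real.norm_eq_abs, abs_of_pos (expDecay_pos lam 6 R)]
    have h4 : (v R) ^ 2 = (ε / lam) ^ 2 * expDecay lam 6 R := by
      simp only [hv, mul_pow]
      rw [sq (expDecay lam 3 R), expDecay_mul]
      norm_num
    calc |v R - Real.sinh (v R)| = |Real.sinh (v R) - v R| := abs_sub_comm _ _
      _ ≤ (v R) ^ 2 := abs_sinh_sub_le _ h1
      _ = (ε / lam) ^ 2 * expDecay lam 6 R := h4
  have hp3 : (fun R => (v R - Real.sinh (v R))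
      * ((Real.sinh (f R / lam))⁻¹ * s₀⁻¹)) =O[atTop] expDecay lam 6 :=
    isBigO_mul_tendsto hlam hp3core ((hst.inv₀ hs₀).mul tendsto_const_nhds) le_rfl
  have hD4O : D4 =O[atTop] expDecay lam 6 := by
    have hsum := ((hp1.const_mul_left (3 / lam)).add
      (hp2.const_mul_left (3 / lam))).add (hp3.const_mul_left (3 / lam))
    exact hsum.congr' (hkey4.mono fun R h => h.symm) EventuallyEq.rfl
  -- assemble
  have hsumO : (fun R => D1 R + D2 R + D3 R + D4 R) =O[atTop] expDecay lam 6 :=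
    ((hD1O.add hD2O).add hD3O).add hD4O
  have htotal : (fun R => trK R - ((3 / lam) * (c₀ / s₀)
      - (12 * ε / lam ^ 2) * (s₀ ^ 2)⁻¹ * Real.exp (-5 * R / lam)))
      =O[atTop] expDecay lam 6 :=
    hsumO.congr' (hkey.mono fun R h => h.symm) EventuallyEq.rfl
  obtain ⟨C, hC⟩ := htotal.bound
  rw [eventually_atTop] at hC
  obtain ⟨R₀, hR₀⟩ := hC
  have hbound : ∀ R, R₀ ≤ R → |trK R - ((3 / lam) * (c₀ / s₀)
      - (12 * ε / lam ^ 2) * (s₀ ^ 2)⁻¹ * Real.exp (-5 * R / lam))|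
      ≤ C * Real.exp (-6 * R / lam) := by
    intro R hR
    have := hR₀ R hR
    rwa [Real.norm_eq_abs, Real.norm_eq_abs, abs_of_pos (expDecay_pos lam 6 R)] at this
  constructor
  · exact ⟨C, R₀, hbound⟩
  · refine ⟨C * |s₀|, R₀, fun R hR => ?_⟩
    have h1 := hbound R hR
    have heq : trK R * s₀ - 3 / lam * c₀
        - -(12 * ε / (lam ^ 2 * s₀)) * Real.exp (-5 * R / lam)
        = s₀ * (trK R - ((3 / lam) * (c₀ / s₀)
          - (12 * ε / lam ^ 2) * (s₀ ^ 2)⁻¹ * Real.exp (-5 * R / lam))) := by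
      field_simp
      ring
    rw [heq, abs_mul]
    calc |s₀| * |trK R - ((3 / lam) * (c₀ / s₀)
        - (12 * ε / lam ^ 2) * (s₀ ^ 2)⁻¹ * Real.exp (-5 * R / lam))|
        ≤ |s₀| * (C * Real.exp (-6 * R / lam)) :=
          mul_le_mul_of_nonneg_left h1 (abs_nonneg _)
      _ = C * |s₀| * Real.exp (-6 * R / lam) := by ring
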